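/- For any matrix D ∈ SL(d+1,ℝ) \ SO(d+1), there exist n ≥ 1, rotations R₀, R₁, …, R_n ∈ SO(d+1), and signs α₁,…,α_n ∈ {−1,+1} such that R₀ D^{α₁} R₁ D^{α₂} ⋯ R_{n−1} D^{α_n} R_n = diag(r₁,…,r_{d+1}) is a diagonal matrix with 0 < r_{d+1} < min₁≤i≤d rᵢ and max_{1<i≤d} rᵢ^d < r₁⋯r_d. -/

import Mathlib

noncomputable section

abbrev SLn (n : ℕ) := Matrix.SpecialLinearGroup (Fin n) ℝ

/-- An element of `SL(n,ℝ)` lies in `SO(n)` iff its matrix is orthogonal. -/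
def IsSO {n : ℕ} (A : SLn n) : Prop :=
  Matrix.transpose (A : Matrix (Fin n) (Fin n) ℝ) * (A : Matrix (Fin n) (Fin n) ℝ) = 1

/-- `soWord D R a n = R₀ D^{a₁} R₁ D^{a₂} ⋯ R_{n-1} D^{a_n} R_n`. -/
def soWord {n : ℕ} (D : SLn n) (R : ℕ → SLn n) (a : ℕ → ℤ) : ℕ → SLn n
  | 0 => R 0
  | k + 1 => soWord D R a k * D ^ (a (k + 1)) * R (k + 1)

open Matrix

section Helpers

lemma IsSO.mul {n : ℕ} {A B : SLn n} (hA : IsSO A) (hB : IsSO B) : IsSO (A * B) := by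
  unfold IsSO at *
  rw [Matrix.SpecialLinearGroup.coe_mul, Matrix.transpose_mul, mul_assoc,
    ← mul_assoc _ _ (B : Matrix (Fin n) (Fin n) ℝ), hA, one_mul, hB]

lemma IsSO.coe_inv {n : ℕ} {A : SLn n} (hA : IsSO A) :
    ((A⁻¹ : SLn n) : Matrix (Fin n) (Fin n) ℝ) = (A : Matrix (Fin n) (Fin n) ℝ)ᵀ := by
  have h1 : (A : Matrix (Fin n) (Fin n) ℝ) * ((A⁻¹ : SLn n) : Matrix (Fin n) (Fin n) ℝ) = 1 := by
    rw [← Matrix.SpecialLinearGroup.coe_mul, mul_inv_cancel, Matrix.SpecialLinearGroup.coe_one]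
  calc ((A⁻¹ : SLn n) : Matrix (Fin n) (Fin n) ℝ)
      = ((A : Matrix (Fin n) (Fin n) ℝ)ᵀ * (A : Matrix (Fin n) (Fin n) ℝ)) *
        ((A⁻¹ : SLn n) : Matrix (Fin n) (Fin n) ℝ) := by rw [hA, one_mul]
    _ = (A : Matrix (Fin n) (Fin n) ℝ)ᵀ := by rw [mul_assoc, h1, mul_one]

lemma IsSO.inv {n : ℕ} {A : SLn n} (hA : IsSO A) : IsSO (A⁻¹) := by
  unfold IsSO
  rw [hA.coe_inv, transpose_transpose, mul_eq_one_comm.mp hA]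

lemma mul_word_helper {G : Type*} [Group G] {x y z w : G} (h : x * y * z = w) (P : G) :
    P * x * y * z = P * w := by
  rw [mul_assoc, mul_assoc, ← mul_assoc x, h]

lemma svd_decomp {n : ℕ} (Dm : Matrix (Fin (n+1)) (Fin (n+1)) ℝ) (hdet : Dm.det = 1) :
    ∃ (A B : Matrix (Fin (n+1)) (Fin (n+1)) ℝ) (σ : Fin (n+1) → ℝ),
      A.det = 1 ∧ B.det = 1 ∧ Aᵀ * A = 1 ∧ Bᵀ * B = 1 ∧ (∀ i, 0 < σ i) ∧ (∏ i, σ i = 1) ∧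
      Dm = A * Matrix.diagonal σ * B := by
  classical
  set M : Matrix (Fin (n+1)) (Fin (n+1)) ℝ := Dmᴴ * Dm with hMdef
  have hM : M.IsHermitian := isHermitian_conjTranspose_mul_self Dm
  set μ : Fin (n+1) → ℝ := hM.eigenvalues with hμdef
  have hdetM : M.det = 1 := by
    rw [hMdef, det_mul, det_conjTranspose, hdet]; simp
  have hprodμ : ∏ i, μ i = 1 := by
    have := hM.det_eq_prod_eigenvalues
    rw [hdetM] at this
    simpa using this.symm
  have hμ0 : ∀ i, 0 ≤ μ i := fun i =>
    (posSemidef_conjTranspose_mul_self Dm).eigenvalues_nonneg i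
  have hμpos : ∀ i, 0 < μ i := by
    intro i
    rcases (hμ0 i).lt_or_eq with h | h
    · exact h
    · exfalso
      have : ∏ j, μ j = 0 := Finset.prod_eq_zero (Finset.mem_univ i) h.symm
      rw [hprodμ] at this; norm_num at this
  set σ : Fin (n+1) → ℝ := fun i => Real.sqrt (μ i) with hσdef
  have hσpos : ∀ i, 0 < σ i := fun i => Real.sqrt_pos.mpr (hμpos i)
  have hσsq : ∀ i, σ i * σ i = μ i := fun i => Real.mul_self_sqrt (hμ0 i)
  have hprodσ : ∏ i, σ i = 1 := by
    have h2 : (∏ i, σ i) * (∏ i, σ i) = 1 := by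
      rw [← Finset.prod_mul_distrib]
      simp only [hσsq]; exact hprodμ
    have hpos : 0 < ∏ i, σ i := Finset.prod_pos fun i _ => hσpos i
    rcases mul_self_eq_one_iff.mp h2 with h | h
    · exact h
    · exfalso; rw [h] at hpos; norm_num at hpos
  set Q : Matrix (Fin (n+1)) (Fin (n+1)) ℝ := (↑(hM.eigenvectorUnitary) : Matrix (Fin (n+1)) (Fin (n+1)) ℝ) with hQdef
  have hstarQ : star Q = Qᵀ := by
    rw [star_eq_conjTranspose]
    ext i j
    simp [conjTranspose_apply]
  have hQQ : Qᵀ * Q = 1 := by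
    rw [← hstarQ]
    exact mem_unitaryGroup_iff'.mp hM.eigenvectorUnitary.2
  have hQQ' : Q * Qᵀ = 1 := by
    rw [← hstarQ]
    exact mem_unitaryGroup_iff.mp hM.eigenvectorUnitary.2
  have hdiagQ : Qᵀ * M * Q = diagonal μ := by
    have := hM.conjStarAlgAut_star_eigenvectorUnitary
    rw [Unitary.conjStarAlgAut_star_apply, hstarQ] at this
    simpa using this
  have hdetQ : Q.det * Q.det = 1 := by
    have := congrArg det hQQ
    rwa [det_mul, det_transpose, det_one] at this
  set ε : ℝ := Q.det with hεdef
  set J : Matrix (Fin (n+1)) (Fin (n+1)) ℝ := diagonal (fun i => if i = 0 then ε else 1) with hJdef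
  have hJJ : J * J = 1 := by
    rw [hJdef, diagonal_mul_diagonal]
    have key : (fun i : Fin (n+1) => (if i = 0 then ε else 1) * (if i = 0 then ε else 1)) = fun _ => (1:ℝ) := by
      funext i; split_ifs with h
      · exact hdetQ
      · rw [mul_one]
    rw [key, diagonal_one]
  have hJT : Jᵀ = J := by rw [hJdef]; exact diagonal_transpose _
  have hdetJ : J.det = ε := by
    rw [hJdef, det_diagonal]
    simp
  set Sd : Matrix (Fin (n+1)) (Fin (n+1)) ℝ := diagonal σ with hSdef
  set Si : Matrix (Fin (n+1)) (Fin (n+1)) ℝ := diagonal (fun i => (σ i)⁻¹) with hSidef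
  have hSSi : Sd * Si = 1 := by
    rw [hSdef, hSidef, diagonal_mul_diagonal]
    have key : (fun i => σ i * (σ i)⁻¹) = fun _ : Fin (n+1) => (1:ℝ) := by
      funext i; exact mul_inv_cancel₀ (hσpos i).ne'
    rw [key, diagonal_one]
  have hSiS : Si * Sd = 1 := by
    rw [hSdef, hSidef, diagonal_mul_diagonal]
    have key : (fun i => (σ i)⁻¹ * σ i) = fun _ : Fin (n+1) => (1:ℝ) := by
      funext i; exact inv_mul_cancel₀ (hσpos i).ne'
    rw [key, diagonal_one]
  have hSiT : Siᵀ = Si := by rw [hSidef]; exact diagonal_transpose _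
  have hprodσi : ∏ i, (σ i)⁻¹ = 1 := by
    have : ∏ i, (σ i)⁻¹ = (∏ i, σ i)⁻¹ := by
      rw [← Finset.prod_inv_distrib]
    rw [this, hprodσ]; norm_num
  set A : Matrix (Fin (n+1)) (Fin (n+1)) ℝ := Dm * Q * Si * J with hAdef
  set B : Matrix (Fin (n+1)) (Fin (n+1)) ℝ := J * Qᵀ with hBdef
  have hJS : J * Sd = Sd * J := by
    rw [hJdef, hSdef, diagonal_mul_diagonal, diagonal_mul_diagonal]
    have key : (fun i : Fin (n+1) => (if i = 0 then ε else 1) * σ i) = fun i => σ i * (if i = 0 then ε else 1) := by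
      funext i; exact mul_comm _ _
    rw [key]
  have hDmT : Dmᵀ = Dmᴴ := by
    ext i j
    simp [conjTranspose_apply]
  refine ⟨A, B, σ, ?_, ?_, ?_, ?_, hσpos, hprodσ, ?_⟩
  · rw [hAdef, det_mul, det_mul, det_mul, hdet, hdetJ, hSidef, det_diagonal, hprodσi, ← hεdef]
    linear_combination hdetQ
  · rw [hBdef, det_mul, hdetJ, det_transpose, ← hεdef, hdetQ]
  · have hAT : Aᵀ = J * Si * Qᵀ * Dmᵀ := by
      rw [hAdef, transpose_mul, transpose_mul, transpose_mul, hJT, hSiT]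
      noncomm_ring
    rw [hAT, hAdef]
    calc J * Si * Qᵀ * Dmᵀ * (Dm * Q * Si * J)
        = J * (Si * (Qᵀ * M * Q) * Si) * J := by rw [hDmT, hMdef]; noncomm_ring
      _ = J * (Si * diagonal μ * Si) * J := by rw [hdiagQ]
      _ = 1 := by
          rw [hSidef, diagonal_mul_diagonal, diagonal_mul_diagonal]
          have key : (fun i => (σ i)⁻¹ * μ i * (σ i)⁻¹) = fun _ : Fin (n+1) => (1:ℝ) := by
            funext i
            have h := (hσpos i).ne'
            rw [← hσsq i]
            calc (σ i)⁻¹ * (σ i * σ i) * (σ i)⁻¹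
                = ((σ i)⁻¹ * σ i) * (σ i * (σ i)⁻¹) := by ring
              _ = 1 := by rw [inv_mul_cancel₀ h, mul_inv_cancel₀ h, one_mul]
          rw [key, diagonal_one, mul_one, hJJ]
  · rw [hBdef, transpose_mul, hJT, transpose_transpose, mul_assoc, ← mul_assoc J J, hJJ, one_mul, hQQ']
  · rw [hAdef, hBdef, ← hSdef]
    calc Dm = Dm * Q * (Si * Sd) * (J * J) * Qᵀ := by rw [hSiS, hJJ]; simp [mul_assoc, hQQ']
      _ = Dm * Q * Si * (Sd * J) * (J * Qᵀ) := by noncomm_ring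
      _ = Dm * Q * Si * J * Sd * (J * Qᵀ) := by rw [← hJS]; noncomm_ring

variable {m : ℕ}

def signFix (e : Equiv.Perm (Fin (m+1))) : Matrix (Fin (m+1)) (Fin (m+1)) ℝ :=
  diagonal (fun i => if i = 0 then ((Equiv.Perm.sign e : ℤ) : ℝ) else 1)

def spm (e : Equiv.Perm (Fin (m+1))) : Matrix (Fin (m+1)) (Fin (m+1)) ℝ :=
  signFix e * e.permMatrix ℝ

lemma sign_sq (e : Equiv.Perm (Fin (m+1))) :
    ((Equiv.Perm.sign e : ℤ) : ℝ) * ((Equiv.Perm.sign e : ℤ) : ℝ) = 1 := by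
  rcases Int.units_eq_one_or (Equiv.Perm.sign e) with h | h <;> rw [h] <;> norm_num

lemma signFix_mul_self (e : Equiv.Perm (Fin (m+1))) : signFix e * signFix e = 1 := by
  rw [signFix, diagonal_mul_diagonal]
  have key : (fun i : Fin (m+1) => (if i = 0 then ((Equiv.Perm.sign e : ℤ) : ℝ) else 1) *
      (if i = 0 then ((Equiv.Perm.sign e : ℤ) : ℝ) else 1)) = fun _ => (1:ℝ) := by
    funext i; split_ifs with h
    · exact sign_sq e
    · rw [mul_one]
  rw [key, diagonal_one]

lemma permMatrix_transpose_mul (e : Equiv.Perm (Fin (m+1))) :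
    (e.permMatrix ℝ)ᵀ * e.permMatrix ℝ = 1 := by
  rw [Equiv.Perm.permMatrix, ← PEquiv.toMatrix_symm, ← Equiv.toPEquiv_symm,
    ← PEquiv.toMatrix_trans, ← Equiv.toPEquiv_trans]
  simp

lemma spm_det (e : Equiv.Perm (Fin (m+1))) : (spm e).det = 1 := by
  rw [spm, det_mul, signFix, det_diagonal, det_permutation]
  simp only [Finset.prod_ite_eq']
  simp [sign_sq e]

lemma spm_orth (e : Equiv.Perm (Fin (m+1))) : (spm e)ᵀ * spm e = 1 := by
  rw [spm, transpose_mul]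
  have h1 : (signFix e)ᵀ = signFix e := diagonal_transpose _
  calc (e.permMatrix ℝ)ᵀ * (signFix e)ᵀ * (signFix e * e.permMatrix ℝ)
      = (e.permMatrix ℝ)ᵀ * ((signFix e)ᵀ * signFix e) * e.permMatrix ℝ := by noncomm_ring
    _ = 1 := by rw [h1, signFix_mul_self, mul_one, permMatrix_transpose_mul]

lemma spm_conj (e : Equiv.Perm (Fin (m+1))) (w : Fin (m+1) → ℝ) :
    spm e * diagonal w = diagonal (fun i => w (e i)) * spm e := by
  rw [spm]
  have h1 : e.permMatrix ℝ * diagonal w = diagonal (fun i => w (e i)) * e.permMatrix ℝ := by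
    rw [Equiv.Perm.permMatrix, PEquiv.toMatrix_toPEquiv_mul, PEquiv.mul_toMatrix_toPEquiv]
    ext i j
    simp only [submatrix_apply, diagonal_apply, id_eq]
    by_cases h : e i = j
    · rw [if_pos h, if_pos (by rw [← h, Equiv.symm_apply_apply]), h]
    · rw [if_neg h, if_neg (fun hc => h (by rw [hc, Equiv.apply_symm_apply]))]
  have h2 : signFix e * diagonal (fun i => w (e i)) = diagonal (fun i => w (e i)) * signFix e := by
    rw [signFix, diagonal_mul_diagonal, diagonal_mul_diagonal]
    have key : (fun i : Fin (m+1) => (if i = 0 then ((Equiv.Perm.sign e : ℤ) : ℝ) else 1) * w (e i))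
        = fun i => w (e i) * (if i = 0 then ((Equiv.Perm.sign e : ℤ) : ℝ) else 1) := by
      funext i; exact mul_comm _ _
    rw [key]
  calc signFix e * e.permMatrix ℝ * diagonal w
      = signFix e * (diagonal (fun i => w (e i)) * e.permMatrix ℝ) := by rw [mul_assoc, h1]
    _ = diagonal (fun i => w (e i)) * (signFix e * e.permMatrix ℝ) := by
        rw [← mul_assoc, h2, mul_assoc]

end Helpers

/-- For any `D ∈ SL(d+1,ℝ) \ SO(d+1)` there exist `n ≥ 1`, rotations
`R₀,…,R_n ∈ SO(d+1)` and signs `α₁,…,α_n ∈ {−1,+1}` such that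
`R₀ D^{α₁} R₁ ⋯ R_{n−1} D^{α_n} R_n = diag(r₁,…,r_{d+1})` with
`0 < r_{d+1} < min_{1≤i≤d} rᵢ` and `max_{1<i≤d} rᵢ^d < r₁⋯r_d`. -/
theorem stmt16 (d : ℕ) (D : SLn (d + 1)) (hD : ¬ IsSO D) :
    ∃ (n : ℕ), 1 ≤ n ∧ ∃ (R : ℕ → SLn (d + 1)) (a : ℕ → ℤ),
      (∀ i, i ≤ n → IsSO (R i)) ∧
      (∀ i, 1 ≤ i → i ≤ n → a i = 1 ∨ a i = -1) ∧
      ∃ r : Fin (d + 1) → ℝ,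
        ((soWord D R a n : SLn (d + 1)) : Matrix (Fin (d + 1)) (Fin (d + 1)) ℝ) =
          Matrix.diagonal r ∧
        0 < r (Fin.last d) ∧
        (∀ i : Fin (d + 1), i ≠ Fin.last d → r (Fin.last d) < r i) ∧
        (∀ i : Fin (d + 1), i ≠ 0 → i ≠ Fin.last d →
          (r i) ^ d < ∏ j ∈ Finset.univ.erase (Fin.last d), r j) := by
  classical
  rcases Nat.eq_zero_or_pos d with hd0 | hd
  · subst hd0
    exfalso
    apply hD
    have h1 : (D : Matrix (Fin 1) (Fin 1) ℝ) = 1 := by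
      have h2 := D.2
      ext i j
      fin_cases i; fin_cases j
      simpa [Matrix.det_fin_one] using h2
    unfold IsSO
    rw [h1]
    simp
  -- main case, d ≥ 1
  obtain ⟨Am, Bm, σ, hdetA, hdetB, hAorth, hBorth, hσpos, hprodσ, hDsvd⟩ :=
    svd_decomp (D : Matrix (Fin (d+1)) (Fin (d+1)) ℝ) D.2
  -- two distinct singular values
  have hexists : ∃ i j, σ i < σ j := by
    by_contra hc
    push_neg at hc
    have hall : ∀ i, σ i = σ 0 := fun i => le_antisymm (hc 0 i) (hc i 0)
    have hp : σ 0 ^ (d+1) = 1 := by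
      rw [← hprodσ, Finset.prod_congr rfl (fun i _ => hall i)]
      simp
    have hσ0 : σ 0 = 1 := by
      rcases lt_trichotomy (σ 0) 1 with h | h | h
      · exfalso
        have := pow_lt_one₀ (le_of_lt (hσpos 0)) h (Nat.succ_ne_zero d)
        rw [hp] at this; norm_num at this
      · exact h
      · exfalso
        have := one_lt_pow₀ h (Nat.succ_ne_zero d)
        rw [hp] at this; norm_num at this
    have hdiag1 : Matrix.diagonal σ = 1 := by
      have : σ = fun _ => (1:ℝ) := by funext i; rw [hall i, hσ0]
      rw [this, diagonal_one]
    apply hD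
    unfold IsSO
    rw [hDsvd, hdiag1, mul_one, transpose_mul, mul_assoc, ← mul_assoc Amᵀ, hAorth,
      one_mul, hBorth]
  obtain ⟨imin, imax, hlt⟩ := hexists
  have h0l : (0 : Fin (d + 1)) ≠ Fin.last d := by
    intro h
    have := congrArg Fin.val h
    simp [Fin.last] at this
    omega
  -- permutations
  set e₁ : Equiv.Perm (Fin (d+1)) := Equiv.swap 0 imax with he1
  set j : Fin (d+1) := e₁.symm imin with hjdef
  have hj0 : j ≠ 0 := by
    intro h
    have : imin = e₁ 0 := by rw [← h, hjdef, Equiv.apply_symm_apply]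
    rw [he1, Equiv.swap_apply_left] at this
    rw [this] at hlt
    exact lt_irrefl _ hlt
  set e₂ : Equiv.Perm (Fin (d+1)) := Equiv.swap (Fin.last d) j with he2
  set π : Equiv.Perm (Fin (d+1)) := e₂.trans e₁ with hπdef
  have hπl : π (Fin.last d) = imin := by
    rw [hπdef, Equiv.trans_apply, he2, Equiv.swap_apply_left, hjdef, Equiv.apply_symm_apply]
  have hπ0 : π 0 = imax := by
    rw [hπdef, Equiv.trans_apply, he2, Equiv.swap_apply_of_ne_of_ne h0l (Ne.symm hj0),
      he1, Equiv.swap_apply_left]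
  set τ : Equiv.Perm (Fin (d+1)) := Equiv.swap 0 (Fin.last d) with hτdef
  set π' : Equiv.Perm (Fin (d+1)) := τ.trans π with hπ'def
  have hπ'0 : π' 0 = imin := by
    rw [hπ'def, Equiv.trans_apply, hτdef, Equiv.swap_apply_left, hπl]
  have hπ'l : π' (Fin.last d) = imax := by
    rw [hπ'def, Equiv.trans_apply, hτdef, Equiv.swap_apply_right, hπ0]
  have hπ'mid : ∀ i, i ≠ 0 → i ≠ Fin.last d → π' i = π i := by
    intro i h1 h2
    rw [hπ'def, Equiv.trans_apply, hτdef, Equiv.swap_apply_of_ne_of_ne h1 h2]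
  -- products
  have hprodu : ∏ i, σ (π i) = 1 := by rw [Equiv.prod_comp π σ]; exact hprodσ
  have hprodv : ∏ i, σ (π' i) = 1 := by rw [Equiv.prod_comp π' σ]; exact hprodσ
  have hprodvi : ∏ i, (σ (π' i))⁻¹ = 1 := by
    rw [Finset.prod_inv_distrib, hprodv]; norm_num
  -- group elements
  set Ag : SLn (d+1) := ⟨Am, hdetA⟩ with hAg
  set Bg : SLn (d+1) := ⟨Bm, hdetB⟩ with hBg
  set Sig : SLn (d+1) := ⟨Matrix.diagonal σ, by rw [det_diagonal]; exact hprodσ⟩ with hSig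
  set Sg : SLn (d+1) := ⟨spm π, spm_det π⟩ with hSg
  set Tg : SLn (d+1) := ⟨spm π', spm_det π'⟩ with hTg
  set Ug : SLn (d+1) := ⟨Matrix.diagonal (fun i => σ (π i)),
    by rw [det_diagonal]; exact hprodu⟩ with hUg
  set Vg : SLn (d+1) := ⟨Matrix.diagonal (fun i => σ (π' i)),
    by rw [det_diagonal]; exact hprodv⟩ with hVg
  set Wg : SLn (d+1) := ⟨Matrix.diagonal (fun i => (σ (π' i))⁻¹),
    by rw [det_diagonal]; exact hprodvi⟩ with hWg
  have hAgSO : IsSO Ag := hAorth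
  have hBgSO : IsSO Bg := hBorth
  have hSgSO : IsSO Sg := spm_orth π
  have hTgSO : IsSO Tg := spm_orth π'
  have hDg : D = Ag * Sig * Bg := Subtype.ext hDsvd
  have hDinv : D⁻¹ = Bg⁻¹ * Sig⁻¹ * Ag⁻¹ := by rw [hDg]; group
  have hSU : Sg * Sig = Ug * Sg := Subtype.ext (spm_conj π σ)
  have hTV : Tg * Sig = Vg * Tg := Subtype.ext (spm_conj π' σ)
  have hVW : Vg * Wg = 1 := by
    apply Subtype.ext
    show Matrix.diagonal _ * Matrix.diagonal _ = _
    rw [diagonal_mul_diagonal]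
    have key : (fun i => σ (π' i) * (σ (π' i))⁻¹) = fun _ : Fin (d+1) => (1:ℝ) := by
      funext i; exact mul_inv_cancel₀ (hσpos (π' i)).ne'
    rw [key, diagonal_one]
    rw [Matrix.SpecialLinearGroup.coe_one]
  have hWinv : Vg⁻¹ = Wg := inv_eq_of_mul_eq_one_right hVW
  set Δg : SLn (d+1) := Ug * Vg⁻¹ with hΔdef
  have hTc : Tg * Sig⁻¹ * Tg⁻¹ = Vg⁻¹ := by
    have h1 : Tg * Sig * Tg⁻¹ = Vg := by rw [hTV, mul_assoc, mul_inv_cancel, mul_one]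
    rw [← h1]; group
  -- keys
  have hkey1 : (Sg * Ag⁻¹) * (Ag * Sig * Bg) * (Bg⁻¹ * Sg⁻¹ * Tg * Bg) = Ug * Tg * Bg := by
    calc (Sg * Ag⁻¹) * (Ag * Sig * Bg) * (Bg⁻¹ * Sg⁻¹ * Tg * Bg)
        = (Sg * Sig) * (Sg⁻¹ * (Tg * Bg)) := by group
      _ = (Ug * Sg) * (Sg⁻¹ * (Tg * Bg)) := by rw [hSU]
      _ = Ug * Tg * Bg := by group
  have hkey2 : (Ug * Tg * Bg) * (Bg⁻¹ * Sig⁻¹ * Ag⁻¹) * (Ag * Tg⁻¹ * Sg * Ag⁻¹) =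
      Δg * (Sg * Ag⁻¹) := by
    calc (Ug * Tg * Bg) * (Bg⁻¹ * Sig⁻¹ * Ag⁻¹) * (Ag * Tg⁻¹ * Sg * Ag⁻¹)
        = Ug * (Tg * Sig⁻¹ * Tg⁻¹) * (Sg * Ag⁻¹) := by group
      _ = Ug * Vg⁻¹ * (Sg * Ag⁻¹) := by rw [hTc]
      _ = Δg * (Sg * Ag⁻¹) := by rw [hΔdef]
  have hkey3 : (Ug * Tg * Bg) * (Bg⁻¹ * Sig⁻¹ * Ag⁻¹) * (Ag * Tg⁻¹) = Δg := by
    calc (Ug * Tg * Bg) * (Bg⁻¹ * Sig⁻¹ * Ag⁻¹) * (Ag * Tg⁻¹)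
        = Ug * (Tg * Sig⁻¹ * Tg⁻¹) := by group
      _ = Ug * Vg⁻¹ := by rw [hTc]
      _ = Δg := by rw [hΔdef]
  -- the word data
  set R : ℕ → SLn (d+1) := fun i =>
    if i = 0 then Sg * Ag⁻¹
    else if i = 2*d then Ag * Tg⁻¹
    else if Odd i then Bg⁻¹ * Sg⁻¹ * Tg * Bg
    else Ag * Tg⁻¹ * Sg * Ag⁻¹ with hRdef
  set a : ℕ → ℤ := fun i => if Odd i then 1 else -1 with hadef
  have hsucc : ∀ k, soWord D R a (k+1) = soWord D R a k * D ^ (a (k+1)) * R (k+1) :=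
    fun k => rfl
  have hR0 : R 0 = Sg * Ag⁻¹ := by simp [hRdef]
  have hRodd : ∀ k, k < d → R (2*k+1) = Bg⁻¹ * Sg⁻¹ * Tg * Bg := by
    intro k hk
    simp only [hRdef]
    rw [if_neg (by omega), if_neg (by omega), if_pos (Nat.odd_iff.mpr (by omega))]
  have hReven : ∀ k, 1 ≤ k → k < d → R (2*k) = Ag * Tg⁻¹ * Sg * Ag⁻¹ := by
    intro k h1 h2
    simp only [hRdef]
    rw [if_neg (by omega), if_neg (by omega), if_neg (by rw [Nat.odd_iff]; omega)]
  have hRlast : R (2*d) = Ag * Tg⁻¹ := by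
    simp only [hRdef]
    rw [if_neg (by omega)]
    simp
  have ha1 : ∀ i, Odd i → a i = 1 := by intro i h; simp only [hadef, if_pos h]
  have ha2 : ∀ i, ¬ Odd i → a i = -1 := by intro i h; simp only [hadef, if_neg h]
  -- the induction
  have main : ∀ k, k < d → soWord D R a (2*k) = Δg^k * (Sg * Ag⁻¹) ∧
      soWord D R a (2*k+1) = Δg^k * (Ug * Tg * Bg) := by
    intro k
    induction k with
    | zero =>
      intro _
      constructor
      · show soWord D R a 0 = _
        rw [soWord, hR0, pow_zero, one_mul]
      · rw [show 2*0+1 = 0+1 by ring, hsucc, show (0+1) = 2*0+1 by ring,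
          hRodd 0 hd, ha1 _ (by rw [Nat.odd_iff]), zpow_one]
        show soWord D R a 0 * D * _ = _
        rw [soWord, hR0, pow_zero, one_mul, hDg, hkey1]
    | succ k ih =>
      intro hk
      obtain ⟨ih1, ih2⟩ := ih (by omega)
      have hstep : soWord D R a (2*(k+1)) = Δg^(k+1) * (Sg * Ag⁻¹) := by
        rw [show 2*(k+1) = (2*k+1)+1 by ring, hsucc, ih2,
          ha2 _ (by rw [Nat.odd_iff]; omega), _root_.zpow_neg_one, hDinv,
          show (2*k+1)+1 = 2*(k+1) by ring, hReven (k+1) (by omega) hk,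
          mul_word_helper hkey2, ← mul_assoc, ← pow_succ]
      refine ⟨hstep, ?_⟩
      rw [show 2*(k+1)+1 = (2*(k+1))+1 by ring, hsucc, hstep,
        ha1 _ (by rw [Nat.odd_iff]; omega), zpow_one, hDg,
        hRodd (k+1) hk, mul_word_helper hkey1]
  have hfinal : soWord D R a (2*d) = Δg^d := by
    obtain ⟨_, ih2⟩ := main (d-1) (by omega)
    have he : 2*d = (2*(d-1)+1)+1 := by omega
    rw [he, hsucc, ih2, ha2 _ (by rw [Nat.odd_iff]; omega), _root_.zpow_neg_one, hDinv,
      show (2*(d-1)+1)+1 = 2*d by omega, hRlast, mul_word_helper hkey3, ← pow_succ,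
      show d-1+1 = d by omega]
  -- diagonal entries
  set δ : Fin (d+1) → ℝ := fun i => σ (π i) * (σ (π' i))⁻¹ with hδdef
  have hΔmat : ((Δg : SLn (d+1)) : Matrix (Fin (d+1)) (Fin (d+1)) ℝ) = Matrix.diagonal δ := by
    rw [hΔdef, hWinv, Matrix.SpecialLinearGroup.coe_mul]
    show Matrix.diagonal _ * Matrix.diagonal _ = _
    rw [diagonal_mul_diagonal]
  set r : Fin (d+1) → ℝ := fun i => δ i ^ d with hrdef
  have hwordmat : ((soWord D R a (2*d) : SLn (d+1)) : Matrix (Fin (d+1)) (Fin (d+1)) ℝ) =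
      Matrix.diagonal r := by
    rw [hfinal, Matrix.SpecialLinearGroup.coe_pow, hΔmat, diagonal_pow]
    congr 1
  -- numeric facts
  have hx : 0 < σ imin := hσpos imin
  have hy : 0 < σ imax := hσpos imax
  have hδ0 : δ 0 = σ imax * (σ imin)⁻¹ := by rw [hδdef]; simp only; rw [hπ0, hπ'0]
  have hδl : δ (Fin.last d) = σ imin * (σ imax)⁻¹ := by
    rw [hδdef]; simp only; rw [hπl, hπ'l]
  have hδmid : ∀ i, i ≠ 0 → i ≠ Fin.last d → δ i = 1 := by
    intro i h1 h2
    rw [hδdef]; simp only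
    rw [hπ'mid i h1 h2]
    exact mul_inv_cancel₀ (hσpos (π i)).ne'
  have hδl_pos : 0 < δ (Fin.last d) := by
    rw [hδl]; positivity
  have hδl_lt1 : δ (Fin.last d) < 1 := by
    rw [hδl]
    rw [mul_inv_lt_iff₀ hy, one_mul]
    exact hlt
  have hδ0_gt1 : 1 < δ 0 := by
    rw [hδ0]
    rw [lt_mul_inv_iff₀ hx, one_mul]
    exact hlt
  have hprodδ : ∏ i, δ i = 1 := by
    rw [hδdef]
    rw [Finset.prod_mul_distrib, hprodu, hprodvi, mul_one]
  have hprodr : ∏ i, r i = 1 := by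
    simp only [hrdef]
    rw [Finset.prod_pow, hprodδ, one_pow]
  have hrl_pos : 0 < r (Fin.last d) := by
    rw [hrdef]; exact pow_pos hδl_pos d
  have hrl_lt1 : r (Fin.last d) < 1 := by
    rw [hrdef]
    exact pow_lt_one₀ (le_of_lt hδl_pos) hδl_lt1 (by omega)
  have herase : ∏ j ∈ Finset.univ.erase (Fin.last d), r j = (r (Fin.last d))⁻¹ := by
    have h1 : r (Fin.last d) * (∏ j ∈ Finset.univ.erase (Fin.last d), r j) = 1 := by
      rw [Finset.mul_prod_erase Finset.univ r (Finset.mem_univ (Fin.last d))]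
      exact hprodr
    have h2 : (∏ j ∈ Finset.univ.erase (Fin.last d), r j) * r (Fin.last d) = 1 := by
      rw [mul_comm]; exact h1
    exact eq_inv_of_mul_eq_one_left h2
  refine ⟨2*d, by omega, R, a, ?_, ?_, r, hwordmat, hrl_pos, ?_, ?_⟩
  · -- IsSO of all R i
    intro i _
    simp only [hRdef]
    split_ifs
    · exact hSgSO.mul hAgSO.inv
    · exact hAgSO.mul hTgSO.inv
    · exact ((hBgSO.inv.mul hSgSO.inv).mul hTgSO).mul hBgSO
    · exact ((hAgSO.mul hTgSO.inv).mul hSgSO).mul hAgSO.inv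
  · intro i _ _
    rw [hadef]
    simp only
    split_ifs
    · left; rfl
    · right; rfl
  · -- r last is strictly smallest
    intro i hi
    by_cases h0 : i = 0
    · subst h0
      rw [hrdef]
      simp only
      exact pow_lt_pow_left₀ (lt_trans hδl_lt1 hδ0_gt1) (le_of_lt hδl_pos) (by omega)
    · have : r i = 1 := by rw [hrdef]; simp only; rw [hδmid i h0 hi, one_pow]
      rw [this]
      exact hrl_lt1
  · intro i h0 hl
    have hri : r i = 1 := by rw [hrdef]; simp only; rw [hδmid i h0 hl, one_pow]
    rw [hri, one_pow, herase]
    have hi2 : 0 < (r (Fin.last d))⁻¹ := inv_pos.mpr hrl_pos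
    nlinarith [mul_inv_cancel₀ hrl_pos.ne', hrl_pos, hrl_lt1, hi2]
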